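/- Optimal strategy for the generalized AFS model, Version 2 (Theorem 1 of the paper): Assume the resilience function ρ̄ satisfies k ≤ ρ̄ ≤ K with 0 < k < K and 1 − τρ̄′(x)x > 0 for all x ∈ ℝ, assume that the shape function satisfies x² · inf{f(y) : y between ā(x)x and x} → ∞ as |x| → ∞, and assume that the function h₂(x) := x·[f(x) − ā(x)²f(ā(x)x)(1 − τρ̄′(x)x)] / [f(x) − ā(x)f(ā(x)x)(1 − τρ̄′(x)x)] is one-to-one. Then the cost functional C⁽²⁾ has a unique minimizer ξ = (ξ₀,…,ξ_N) on the set Ξ = {x ∈ ℝ^{N+1} : ∑ₙ xₙ = X₀}. The initial order ξ₀ is the unique solution of F⁻¹(X₀ − N[ξ₀ − F(ā(F⁻¹(ξ₀))·F⁻¹(ξ₀))]) = h₂(F⁻¹(ξ₀)); the intermediate orders satisfy ξ₁ = … = ξ_{N−1} = ξ₀ − F(ā(F⁻¹(ξ₀))·F⁻¹(ξ₀)); the final order is ξ_N = X₀ − ∑_{n=0}^{N−1} ξₙ; and all components are strictly positive: ξₙ > 0 for all n. -/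

import Mathlib

open Real Filter Finset

/-- `Fi f x = F(x) = ∫₀ˣ f(y) dy`. -/
noncomputable def Fi (f : ℝ → ℝ) (x : ℝ) : ℝ := ∫ y in (0:ℝ)..x, f y

/-- `Ft f x = F̃(x) = ∫₀ˣ y f(y) dy`. -/
noncomputable def Ft (f : ℝ → ℝ) (x : ℝ) : ℝ := ∫ y in (0:ℝ)..x, y * f y

/-- `Gf f Finv = G = F̃ ∘ F⁻¹`. -/
noncomputable def Gf (f Finv : ℝ → ℝ) (x : ℝ) : ℝ := Ft f (Finv x)

/-- `ab τ ρ x = ā(x) = exp(−τ ρ̄(x))`. -/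
noncomputable def ab (τ : ℝ) (ρ : ℝ → ℝ) (x : ℝ) : ℝ := Real.exp (-(τ * ρ x))

/-- Version 2 dynamics: `D₀ = 0`, `Dₙ⁺ = F⁻¹(F(Dₙ) + xₙ)`, `D_{n+1} = ā(Dₙ⁺)·Dₙ⁺`. -/
noncomputable def Dv (f Finv : ℝ → ℝ) (τ : ℝ) (ρ : ℝ → ℝ) (x : ℕ → ℝ) : ℕ → ℝ
  | 0 => 0
  | n + 1 =>
      ab τ ρ (Finv (Fi f (Dv f Finv τ ρ x n) + x n)) * Finv (Fi f (Dv f Finv τ ρ x n) + x n)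

/-- Version 2 cost functional `C⁽²⁾`. -/
noncomputable def C2 (f Finv : ℝ → ℝ) (τ : ℝ) (ρ : ℝ → ℝ) (N : ℕ) (x : ℕ → ℝ) : ℝ :=
  ∑ n ∈ Finset.range (N + 1),
    (Gf f Finv (x n + Fi f (Dv f Finv τ ρ x n)) - Ft f (Dv f Finv τ ρ x n))

/-- The function `h₂` of the generalized AFS model, Version 2. -/
noncomputable def h2 (f : ℝ → ℝ) (τ : ℝ) (ρ : ℝ → ℝ) (x : ℝ) : ℝ :=
  x * ((f x - (ab τ ρ x) ^ 2 * f (ab τ ρ x * x) * (1 - τ * deriv ρ x * x)) /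
    (f x - ab τ ρ x * f (ab τ ρ x * x) * (1 - τ * deriv ρ x * x)))


noncomputable def gab (τ : ℝ) (ρ : ℝ → ℝ) (d : ℝ) : ℝ := ab τ ρ d * d
noncomputable def psi (f : ℝ → ℝ) (τ : ℝ) (ρ : ℝ → ℝ) (d : ℝ) : ℝ := Fi f d - Fi f (gab τ ρ d)
noncomputable def phi (f : ℝ → ℝ) (τ : ℝ) (ρ : ℝ → ℝ) (d : ℝ) : ℝ := Ft f d - Ft f (gab τ ρ d)
noncomputable def den (f : ℝ → ℝ) (τ : ℝ) (ρ : ℝ → ℝ) (d : ℝ) : ℝ :=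
  f d - ab τ ρ d * f (gab τ ρ d) * (1 - τ * deriv ρ d * d)
noncomputable def numf (f : ℝ → ℝ) (τ : ℝ) (ρ : ℝ → ℝ) (d : ℝ) : ℝ :=
  f d - (ab τ ρ d) ^ 2 * f (gab τ ρ d) * (1 - τ * deriv ρ d * d)

section basics
variable {f Finv : ℝ → ℝ} {τ : ℝ} {ρ : ℝ → ℝ}

lemma hasDerivAt_Fi (hf : Continuous f) (x : ℝ) : HasDerivAt (Fi f) (f x) x :=
  intervalIntegral.integral_hasDerivAt_right (hf.intervalIntegrable 0 x)
    (hf.stronglyMeasurableAtFilter _ _) hf.continuousAt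

lemma hasDerivAt_Ft (hf : Continuous f) (x : ℝ) : HasDerivAt (Ft f) (x * f x) x :=
  intervalIntegral.integral_hasDerivAt_right ((continuous_id.mul hf).intervalIntegrable 0 x)
    ((continuous_id.mul hf).stronglyMeasurableAtFilter _ _) (continuous_id.mul hf).continuousAt

lemma Fi_zero : Fi f 0 = 0 := by simp [Fi]
lemma Ft_zero : Ft f 0 = 0 := by simp [Ft]

lemma Fi_strictMono (hf : Continuous f) (hfpos : ∀ x, 0 < f x) : StrictMono (Fi f) :=
  strictMono_of_deriv_pos (fun x => by rw [(hasDerivAt_Fi hf x).deriv]; exact hfpos x)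

lemma Ft_nonneg (hf : Continuous f) (hfpos : ∀ x, 0 < f x) (x : ℝ) : 0 ≤ Ft f x := by
  rcases le_or_gt 0 x with h | h
  · exact intervalIntegral.integral_nonneg h (fun y hy => mul_nonneg hy.1 (hfpos y).le)
  · rw [Ft, intervalIntegral.integral_symm, ← intervalIntegral.integral_neg]
    exact intervalIntegral.integral_nonneg h.le
      (fun y hy => neg_nonneg.2 (mul_nonpos_of_nonpos_of_nonneg hy.2 (hfpos y).le))
end basics

section inv
variable {f Finv : ℝ → ℝ} {τ : ℝ} {ρ : ℝ → ℝ}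

lemma Finv_strictMono (hf : Continuous f) (hfpos : ∀ x, 0 < f x)
    (hFinv₁ : ∀ x, Fi f (Finv x) = x) : StrictMono Finv := by
  intro a b hab
  by_contra h
  push_neg at h
  have := (Fi_strictMono hf hfpos).monotone h
  rw [hFinv₁, hFinv₁] at this
  exact absurd this (not_le.2 hab)

lemma Finv_surj (hFinv₂ : ∀ x, Finv (Fi f x) = x) : Function.Surjective Finv :=
  fun x => ⟨Fi f x, hFinv₂ x⟩

lemma Finv_continuous (hf : Continuous f) (hfpos : ∀ x, 0 < f x)
    (hFinv₁ : ∀ x, Fi f (Finv x) = x) (hFinv₂ : ∀ x, Finv (Fi f x) = x) :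
    Continuous Finv :=
  (StrictMono.orderIsoOfSurjective Finv (Finv_strictMono hf hfpos hFinv₁)
    (Finv_surj hFinv₂)).continuous

lemma Finv_zero (hf : Continuous f) (hfpos : ∀ x, 0 < f x)
    (hFinv₁ : ∀ x, Fi f (Finv x) = x) : Finv 0 = 0 := by
  have h0 : Fi f (Finv 0) = Fi f 0 := by rw [hFinv₁, Fi_zero]
  exact (Fi_strictMono hf hfpos).injective h0

lemma hasDerivAt_Finv (hf : Continuous f) (hfpos : ∀ x, 0 < f x)
    (hFinv₁ : ∀ x, Fi f (Finv x) = x) (hFinv₂ : ∀ x, Finv (Fi f x) = x) (x : ℝ) :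
    HasDerivAt Finv (1 / f (Finv x)) x := by
  have h := HasDerivAt.of_local_left_inverse
    ((Finv_continuous hf hfpos hFinv₁ hFinv₂).continuousAt (x := x))
    (hasDerivAt_Fi hf (Finv x)) (ne_of_gt (hfpos (Finv x)))
    (Filter.Eventually.of_forall hFinv₁)
  simpa [one_div] using h

lemma hasDerivAt_Gf (hf : Continuous f) (hfpos : ∀ x, 0 < f x)
    (hFinv₁ : ∀ x, Fi f (Finv x) = x) (hFinv₂ : ∀ x, Finv (Fi f x) = x) (x : ℝ) :
    HasDerivAt (Gf f Finv) (Finv x) x := by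
  have h := (hasDerivAt_Ft hf (Finv x)).comp x (hasDerivAt_Finv hf hfpos hFinv₁ hFinv₂ x)
  have : Finv x * f (Finv x) * (1 / f (Finv x)) = Finv x := by
    rw [mul_assoc, mul_one_div, div_self (hfpos (Finv x)).ne', mul_one]
  rw [this] at h
  exact h

lemma Gf_nonneg (hf : Continuous f) (hfpos : ∀ x, 0 < f x) (x : ℝ) : 0 ≤ Gf f Finv x :=
  Ft_nonneg hf hfpos _

end inv

section derivs
variable {f Finv : ℝ → ℝ} {τ : ℝ} {ρ : ℝ → ℝ} {k K : ℝ}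

lemma ab_pos (τ : ℝ) (ρ : ℝ → ℝ) (x : ℝ) : 0 < ab τ ρ x := Real.exp_pos _

lemma ab_lt_one (hτ : 0 < τ) (hk : 0 < k) (hρbd : ∀ x, k ≤ ρ x ∧ ρ x ≤ K) (x : ℝ) :
    ab τ ρ x < 1 := by
  rw [ab, Real.exp_lt_one_iff]
  nlinarith [(hρbd x).1]

lemma ab_le (hτ : 0 < τ) (hk : 0 < k) (hρbd : ∀ x, k ≤ ρ x ∧ ρ x ≤ K) (x : ℝ) :
    ab τ ρ x ≤ Real.exp (-(τ * k)) := by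
  rw [ab, Real.exp_le_exp]
  nlinarith [(hρbd x).1]

lemma ab_ge (hτ : 0 < τ) (hρbd : ∀ x, k ≤ ρ x ∧ ρ x ≤ K) (x : ℝ) :
    Real.exp (-(τ * K)) ≤ ab τ ρ x := by
  rw [ab, Real.exp_le_exp]
  nlinarith [(hρbd x).2]

lemma continuous_ab (hρ : ContDiff ℝ 1 ρ) : Continuous (ab τ ρ) :=
  Real.continuous_exp.comp (continuous_const.mul hρ.continuous).neg

lemma continuous_gab (hρ : ContDiff ℝ 1 ρ) : Continuous (gab τ ρ) :=
  (continuous_ab hρ).mul continuous_id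

lemma hasDerivAt_ab (hρ : ContDiff ℝ 1 ρ) (d : ℝ) :
    HasDerivAt (ab τ ρ) (ab τ ρ d * (-(τ * deriv ρ d))) d := by
  have hd : HasDerivAt ρ (deriv ρ d) d := ((hρ.differentiable one_ne_zero) d).hasDerivAt
  exact ((hd.const_mul τ).neg).exp

lemma hasDerivAt_gab (hρ : ContDiff ℝ 1 ρ) (d : ℝ) :
    HasDerivAt (gab τ ρ) (ab τ ρ d * (1 - τ * deriv ρ d * d)) d := by
  have h := (hasDerivAt_ab (τ := τ) hρ d).mul (hasDerivAt_id d)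
  refine HasDerivAt.congr_deriv h ?_
  simp only [id_eq]
  ring

lemma hasDerivAt_psi (hf : Continuous f) (hρ : ContDiff ℝ 1 ρ) (d : ℝ) :
    HasDerivAt (psi f τ ρ) (den f τ ρ d) d := by
  have h := (hasDerivAt_Fi hf d).sub
    ((hasDerivAt_Fi hf (gab τ ρ d)).comp d (hasDerivAt_gab hρ d))
  refine HasDerivAt.congr_deriv h ?_
  simp only [den, gab]
  ring

lemma hasDerivAt_phi (hf : Continuous f) (hρ : ContDiff ℝ 1 ρ) (d : ℝ) :
    HasDerivAt (phi f τ ρ) (d * numf f τ ρ d) d := by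
  have h := (hasDerivAt_Ft hf d).sub
    ((hasDerivAt_Ft hf (gab τ ρ d)).comp d (hasDerivAt_gab hρ d))
  refine HasDerivAt.congr_deriv h ?_
  simp only [numf, gab]
  ring

lemma continuous_den (hf : Continuous f) (hρ : ContDiff ℝ 1 ρ) :
    Continuous (den f τ ρ) := by
  exact hf.sub (((continuous_ab hρ).mul (hf.comp (continuous_gab hρ))).mul
    (continuous_const.sub ((continuous_const.mul (hρ.continuous_deriv le_rfl)).mul continuous_id)))

lemma continuous_numf (hf : Continuous f) (hρ : ContDiff ℝ 1 ρ) :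
    Continuous (numf f τ ρ) := by
  exact hf.sub ((((continuous_ab hρ).pow 2).mul (hf.comp (continuous_gab hρ))).mul
    (continuous_const.sub ((continuous_const.mul (hρ.continuous_deriv le_rfl)).mul continuous_id)))

lemma h2_eq (d : ℝ) : h2 f τ ρ d = d * (numf f τ ρ d / den f τ ρ d) := rfl

lemma h2_zero : h2 f τ ρ 0 = 0 := by simp [h2]

lemma den_zero_pos (hτ : 0 < τ) (hk : 0 < k) (hfpos : ∀ x, 0 < f x)
    (hρbd : ∀ x, k ≤ ρ x ∧ ρ x ≤ K) : 0 < den f τ ρ 0 := by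
  have h1 : ab τ ρ 0 < 1 := ab_lt_one hτ hk hρbd 0
  have h2 : gab τ ρ 0 = 0 := by simp [gab]
  have := hfpos 0
  simp only [den, h2, mul_zero, sub_zero, mul_one]
  nlinarith [ab_pos τ ρ 0]

lemma den_ne_zero (hτ : 0 < τ) (hk : 0 < k) (hfpos : ∀ x, 0 < f x)
    (hρbd : ∀ x, k ≤ ρ x ∧ ρ x ≤ K) (hh2 : Function.Injective (h2 f τ ρ)) (d : ℝ) :
    den f τ ρ d ≠ 0 := by
  intro h0
  have hd : d ≠ 0 := by
    intro h
    subst h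
    exact (den_zero_pos hτ hk hfpos hρbd).ne' h0
  apply hd
  apply hh2
  rw [h2_eq, h0, div_zero, mul_zero, h2_zero]

lemma den_pos (hf : Continuous f) (hρ : ContDiff ℝ 1 ρ) (hτ : 0 < τ) (hk : 0 < k)
    (hfpos : ∀ x, 0 < f x) (hρbd : ∀ x, k ≤ ρ x ∧ ρ x ≤ K)
    (hh2 : Function.Injective (h2 f τ ρ)) (d : ℝ) : 0 < den f τ ρ d := by
  rcases lt_trichotomy (den f τ ρ d) 0 with h | h | h
  · exfalso
    have h0 : (0 : ℝ) ∈ Set.uIcc (den f τ ρ 0) (den f τ ρ d) :=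
      Set.mem_uIcc.2 (Or.inr ⟨h.le, (den_zero_pos hτ hk hfpos hρbd).le⟩)
    obtain ⟨c, _, hc⟩ := intermediate_value_uIcc ((continuous_den hf hρ).continuousOn) h0
    exact den_ne_zero hτ hk hfpos hρbd hh2 c hc
  · exact absurd h (den_ne_zero hτ hk hfpos hρbd hh2 d)
  · exact h

lemma numf_gt_den (hτ : 0 < τ) (hk : 0 < k) (hfpos : ∀ x, 0 < f x)
    (hρbd : ∀ x, k ≤ ρ x ∧ ρ x ≤ K) (hρ' : ∀ x, 0 < 1 - τ * deriv ρ x * x) (d : ℝ) :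
    den f τ ρ d < numf f τ ρ d := by
  have h1 : ab τ ρ d < 1 := ab_lt_one hτ hk hρbd d
  have h2 : 0 < ab τ ρ d := ab_pos τ ρ d
  have h3 := hfpos (gab τ ρ d)
  have h4 := hρ' d
  simp only [den, numf]
  nlinarith [mul_pos (mul_pos h2 (mul_pos h3 h4)) (sub_pos.mpr h1)]

end derivs

section mono
variable {f Finv : ℝ → ℝ} {τ : ℝ} {ρ : ℝ → ℝ} {k K : ℝ}

lemma h2_continuous (hf : Continuous f) (hρ : ContDiff ℝ 1 ρ) (hτ : 0 < τ) (hk : 0 < k)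
    (hfpos : ∀ x, 0 < f x) (hρbd : ∀ x, k ≤ ρ x ∧ ρ x ≤ K)
    (hh2 : Function.Injective (h2 f τ ρ)) : Continuous (h2 f τ ρ) := by
  have : h2 f τ ρ = fun d => d * (numf f τ ρ d / den f τ ρ d) := funext fun d => h2_eq d
  rw [this]
  exact continuous_id.mul ((continuous_numf hf hρ).div (continuous_den hf hρ)
    (den_ne_zero hτ hk hfpos hρbd hh2))

lemma h2_gt_self (hf : Continuous f) (hρ : ContDiff ℝ 1 ρ) (hτ : 0 < τ) (hk : 0 < k)
    (hfpos : ∀ x, 0 < f x) (hρbd : ∀ x, k ≤ ρ x ∧ ρ x ≤ K)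
    (hρ' : ∀ x, 0 < 1 - τ * deriv ρ x * x)
    (hh2 : Function.Injective (h2 f τ ρ)) {d : ℝ} (hd : 0 < d) : d < h2 f τ ρ d := by
  rw [h2_eq]
  have hden := den_pos hf hρ hτ hk hfpos hρbd hh2 d
  have hnum := numf_gt_den hτ hk hfpos hρbd hρ' d
  nth_rewrite 1 [← mul_one d]
  exact mul_lt_mul_of_pos_left ((one_lt_div hden).2 hnum) hd

lemma h2_lt_self (hf : Continuous f) (hρ : ContDiff ℝ 1 ρ) (hτ : 0 < τ) (hk : 0 < k)
    (hfpos : ∀ x, 0 < f x) (hρbd : ∀ x, k ≤ ρ x ∧ ρ x ≤ K)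
    (hρ' : ∀ x, 0 < 1 - τ * deriv ρ x * x)
    (hh2 : Function.Injective (h2 f τ ρ)) {d : ℝ} (hd : d < 0) : h2 f τ ρ d < d := by
  rw [h2_eq]
  have hden := den_pos hf hρ hτ hk hfpos hρbd hh2 d
  have hnum := numf_gt_den hτ hk hfpos hρbd hρ' d
  have h := mul_lt_mul_of_neg_left ((one_lt_div hden).2 hnum) hd
  rw [mul_one] at h
  exact h

lemma h2_strictMono (hf : Continuous f) (hρ : ContDiff ℝ 1 ρ) (hτ : 0 < τ) (hk : 0 < k)
    (hfpos : ∀ x, 0 < f x) (hρbd : ∀ x, k ≤ ρ x ∧ ρ x ≤ K)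
    (hρ' : ∀ x, 0 < 1 - τ * deriv ρ x * x)
    (hh2 : Function.Injective (h2 f τ ρ)) : StrictMono (h2 f τ ρ) := by
  rcases (h2_continuous hf hρ hτ hk hfpos hρbd hh2).strictMono_of_inj hh2 with h | h
  · exact h
  · exfalso
    have h1 : (1 : ℝ) < h2 f τ ρ 1 := h2_gt_self hf hρ hτ hk hfpos hρbd hρ' hh2 one_pos
    have h2' : h2 f τ ρ 1 < h2 f τ ρ 0 := h (by norm_num)
    rw [h2_zero] at h2'
    linarith

lemma psi_strictMono (hf : Continuous f) (hρ : ContDiff ℝ 1 ρ) (hτ : 0 < τ) (hk : 0 < k)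
    (hfpos : ∀ x, 0 < f x) (hρbd : ∀ x, k ≤ ρ x ∧ ρ x ≤ K)
    (hh2 : Function.Injective (h2 f τ ρ)) : StrictMono (psi f τ ρ) := by
  apply strictMono_of_deriv_pos
  intro x
  rw [(hasDerivAt_psi hf hρ x).deriv]
  exact den_pos hf hρ hτ hk hfpos hρbd hh2 x

lemma gab_lt_self (hτ : 0 < τ) (hk : 0 < k) (hρbd : ∀ x, k ≤ ρ x ∧ ρ x ≤ K) {d : ℝ}
    (hd : 0 < d) : gab τ ρ d < d := by
  have := ab_lt_one hτ hk hρbd d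
  rw [gab]
  nlinarith

lemma gab_gt_self (hτ : 0 < τ) (hk : 0 < k) (hρbd : ∀ x, k ≤ ρ x ∧ ρ x ≤ K) {d : ℝ}
    (hd : d < 0) : d < gab τ ρ d := by
  have := ab_lt_one hτ hk hρbd d
  rw [gab]
  nlinarith

lemma gab_zero : gab τ ρ 0 = 0 := by simp [gab]
lemma psi_zero : psi f τ ρ 0 = 0 := by simp [psi, gab_zero]
lemma phi_zero : phi f τ ρ 0 = 0 := by simp [phi, gab_zero]

lemma psi_pos (hf : Continuous f) (hτ : 0 < τ) (hk : 0 < k) (hfpos : ∀ x, 0 < f x)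
    (hρbd : ∀ x, k ≤ ρ x ∧ ρ x ≤ K) {d : ℝ} (hd : 0 < d) : 0 < psi f τ ρ d :=
  sub_pos.2 (Fi_strictMono hf hfpos (gab_lt_self hτ hk hρbd hd))

lemma psi_nonpos (hf : Continuous f) (hτ : 0 < τ) (hk : 0 < k) (hfpos : ∀ x, 0 < f x)
    (hρbd : ∀ x, k ≤ ρ x ∧ ρ x ≤ K) {d : ℝ} (hd : d ≤ 0) : psi f τ ρ d ≤ 0 := by
  rcases eq_or_lt_of_le hd with h | h
  · rw [h, psi_zero]
  · exact sub_nonpos.2 ((Fi_strictMono hf hfpos).monotone (gab_gt_self hτ hk hρbd h).le)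

lemma phi_as_integral (hf : Continuous f) (d : ℝ) :
    phi f τ ρ d = ∫ y in (gab τ ρ d)..d, y * f y := by
  have hint : ∀ a b : ℝ, IntervalIntegrable (fun y => y * f y) MeasureTheory.volume a b :=
    fun a b => (continuous_id.mul hf).intervalIntegrable a b
  have h := intervalIntegral.integral_interval_sub_left (hint 0 d) (hint 0 (gab τ ρ d))
  rw [phi, Ft, Ft]
  exact h

end mono

section coercive
variable {f Finv : ℝ → ℝ} {τ : ℝ} {ρ : ℝ → ℝ} {k K : ℝ}

lemma sInf_mem_img (hf : Continuous f) (d : ℝ) :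
    sInf (f '' Set.uIcc (gab τ ρ d) d) ∈ f '' Set.uIcc (gab τ ρ d) d :=
  (isCompact_uIcc.image hf).sInf_mem (Set.nonempty_uIcc.image f)

lemma sInf_img_pos (hf : Continuous f) (hfpos : ∀ x, 0 < f x) (d : ℝ) :
    0 < sInf (f '' Set.uIcc (gab τ ρ d) d) := by
  obtain ⟨y, _, hy⟩ := sInf_mem_img (τ := τ) (ρ := ρ) hf d
  rw [← hy]
  exact hfpos y

lemma sInf_img_le (hf : Continuous f) {d y : ℝ} (hy : y ∈ Set.uIcc (gab τ ρ d) d) :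
    sInf (f '' Set.uIcc (gab τ ρ d) d) ≤ f y :=
  csInf_le (isCompact_uIcc.image hf).bddBelow ⟨y, hy, rfl⟩

lemma phi_lower (hf : Continuous f) (hfpos : ∀ x, 0 < f x) (hτ : 0 < τ) (hk : 0 < k)
    (hρbd : ∀ x, k ≤ ρ x ∧ ρ x ≤ K) (d : ℝ) :
    Real.exp (-(τ * K)) * (1 - Real.exp (-(τ * k))) *
      (d ^ 2 * sInf (f '' Set.uIcc (gab τ ρ d) d)) ≤ phi f τ ρ d := by
  set a := ab τ ρ d with ha
  set m := sInf (f '' Set.uIcc (gab τ ρ d) d) with hm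
  have hm_pos : 0 < m := sInf_img_pos hf hfpos d
  have ha_pos : 0 < a := ab_pos τ ρ d
  have ha1 : Real.exp (-(τ * K)) ≤ a := ab_ge hτ hρbd d
  have ha2 : a ≤ Real.exp (-(τ * k)) := ab_le hτ hk hρbd d
  have hek1 : Real.exp (-(τ * k)) < 1 := by
    rw [Real.exp_lt_one_iff]; nlinarith
  have hkey : Real.exp (-(τ * K)) * (1 - Real.exp (-(τ * k))) ≤ a * (1 - a) := by
    apply mul_le_mul ha1 (by linarith) (by linarith) ha_pos.le
  have hint : ∀ a b : ℝ, IntervalIntegrable (fun y => y * f y) MeasureTheory.volume a b :=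
    fun a b => (continuous_id.mul hf).intervalIntegrable a b
  rcases lt_trichotomy d 0 with hd | hd | hd
  · -- d < 0
    have hgd : d ≤ gab τ ρ d := (gab_gt_self hτ hk hρbd hd).le
    have hg0 : gab τ ρ d < 0 := by rw [gab]; exact mul_neg_of_pos_of_neg ha_pos hd
    have hbound : ∀ y ∈ Set.Icc d (gab τ ρ d), y * f y ≤ gab τ ρ d * m := by
      intro y hy
      have hym : y ∈ Set.uIcc (gab τ ρ d) d := by
        rw [Set.uIcc_of_ge hgd]; exact hy
      have h1 : y * f y ≤ y * m := by
        have := sInf_img_le (τ := τ) (ρ := ρ) hf hym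
        nlinarith [hy.2]
      have h2 : y * m ≤ gab τ ρ d * m := mul_le_mul_of_nonneg_right hy.2 hm_pos.le
      linarith
    have h1 : (∫ y in d..(gab τ ρ d), y * f y) ≤ ∫ _y in d..(gab τ ρ d), gab τ ρ d * m := by
      apply intervalIntegral.integral_mono_on hgd (hint d _) (intervalIntegrable_const)
      exact hbound
    rw [intervalIntegral.integral_const] at h1
    rw [phi_as_integral hf, intervalIntegral.integral_symm]
    have halg : (gab τ ρ d - d) • (gab τ ρ d * m) = -(a * (1 - a) * (d ^ 2 * m)) := by
      rw [smul_eq_mul, gab]; ring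
    have : a * (1 - a) * (d ^ 2 * m) ≤ -(∫ y in d..(gab τ ρ d), y * f y) := by
      rw [halg] at h1; linarith
    refine le_trans ?_ this
    apply mul_le_mul_of_nonneg_right hkey
    positivity
  · subst hd
    rw [phi_zero]
    simp
  · -- 0 < d
    have hgd : gab τ ρ d ≤ d := (gab_lt_self hτ hk hρbd hd).le
    have hg0 : 0 < gab τ ρ d := by rw [gab]; exact mul_pos ha_pos hd
    have hbound : ∀ y ∈ Set.Icc (gab τ ρ d) d, gab τ ρ d * m ≤ y * f y := by
      intro y hy
      have hym : y ∈ Set.uIcc (gab τ ρ d) d := by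
        rw [Set.uIcc_of_le hgd]; exact hy
      have h1 : gab τ ρ d * m ≤ y * m := mul_le_mul_of_nonneg_right hy.1 hm_pos.le
      have h2 : y * m ≤ y * f y := by
        have := sInf_img_le (τ := τ) (ρ := ρ) hf hym
        nlinarith [hy.1]
      linarith
    have h1 : (∫ _y in (gab τ ρ d)..d, gab τ ρ d * m) ≤ ∫ y in (gab τ ρ d)..d, y * f y := by
      apply intervalIntegral.integral_mono_on hgd (intervalIntegrable_const) (hint _ d)
      exact hbound
    rw [intervalIntegral.integral_const] at h1
    rw [phi_as_integral hf]
    have halg : (d - gab τ ρ d) • (gab τ ρ d * m) = a * (1 - a) * (d ^ 2 * m) := by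
      rw [smul_eq_mul, gab]; ring
    rw [halg] at h1
    refine le_trans ?_ h1
    apply mul_le_mul_of_nonneg_right hkey
    positivity

lemma phi_nonneg (hf : Continuous f) (hfpos : ∀ x, 0 < f x) (hτ : 0 < τ) (hk : 0 < k)
    (hρbd : ∀ x, k ≤ ρ x ∧ ρ x ≤ K) (d : ℝ) : 0 ≤ phi f τ ρ d := by
  refine le_trans ?_ (phi_lower hf hfpos hτ hk hρbd d)
  have h1 : Real.exp (-(τ * k)) < 1 := by rw [Real.exp_lt_one_iff]; nlinarith
  have h2 := sInf_img_pos (τ := τ) (ρ := ρ) hf hfpos d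
  exact mul_nonneg (mul_nonneg (Real.exp_pos _).le (by linarith))
    (mul_nonneg (sq_nonneg d) h2.le)

lemma phi_coercive_top (hf : Continuous f) (hfpos : ∀ x, 0 < f x) (hτ : 0 < τ) (hk : 0 < k)
    (hρbd : ∀ x, k ≤ ρ x ∧ ρ x ≤ K)
    (hfinf₁ : Filter.Tendsto (fun x : ℝ => x ^ 2 * sInf (f '' Set.uIcc (ab τ ρ x * x) x))
      Filter.atTop Filter.atTop) :
    Filter.Tendsto (phi f τ ρ) Filter.atTop Filter.atTop := by
  have hc : 0 < Real.exp (-(τ * K)) * (1 - Real.exp (-(τ * k))) := by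
    have h1 : Real.exp (-(τ * k)) < 1 := by rw [Real.exp_lt_one_iff]; nlinarith
    exact mul_pos (Real.exp_pos _) (by linarith)
  exact tendsto_atTop_mono (phi_lower hf hfpos hτ hk hρbd) (hfinf₁.const_mul_atTop hc)

lemma phi_coercive_bot (hf : Continuous f) (hfpos : ∀ x, 0 < f x) (hτ : 0 < τ) (hk : 0 < k)
    (hρbd : ∀ x, k ≤ ρ x ∧ ρ x ≤ K)
    (hfinf₂ : Filter.Tendsto (fun x : ℝ => x ^ 2 * sInf (f '' Set.uIcc (ab τ ρ x * x) x))
      Filter.atBot Filter.atTop) :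
    Filter.Tendsto (phi f τ ρ) Filter.atBot Filter.atTop := by
  have hc : 0 < Real.exp (-(τ * K)) * (1 - Real.exp (-(τ * k))) := by
    have h1 : Real.exp (-(τ * k)) < 1 := by rw [Real.exp_lt_one_iff]; nlinarith
    exact mul_pos (Real.exp_pos _) (by linarith)
  exact tendsto_atTop_mono (phi_lower hf hfpos hτ hk hρbd) (hfinf₂.const_mul_atTop hc)

lemma continuous_psi (hf : Continuous f) (hρ : ContDiff ℝ 1 ρ) : Continuous (psi f τ ρ) :=
  continuous_iff_continuousAt.mpr fun x => (hasDerivAt_psi hf hρ x).continuousAt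

lemma continuous_phi (hf : Continuous f) (hρ : ContDiff ℝ 1 ρ) : Continuous (phi f τ ρ) :=
  continuous_iff_continuousAt.mpr fun x => (hasDerivAt_phi hf hρ x).continuousAt

lemma continuous_Fi (hf : Continuous f) : Continuous (Fi f) :=
  continuous_iff_continuousAt.mpr fun x => (hasDerivAt_Fi hf x).continuousAt

lemma continuous_Ft (hf : Continuous f) : Continuous (Ft f) :=
  continuous_iff_continuousAt.mpr fun x => (hasDerivAt_Ft hf x).continuousAt

end coercive

noncomputable def Jv (f Finv : ℝ → ℝ) (τ : ℝ) (ρ : ℝ → ℝ) (X₀ : ℝ) (N : ℕ)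
    (δ : Fin N → ℝ) : ℝ :=
  Gf f Finv (X₀ - ∑ i, psi f τ ρ (δ i)) + ∑ i, phi f τ ρ (δ i)

section jv
variable {f Finv : ℝ → ℝ} {τ : ℝ} {ρ : ℝ → ℝ} {k K : ℝ} {X₀ : ℝ} {N : ℕ}

lemma continuous_Jv (hf : Continuous f) (hfpos : ∀ x, 0 < f x) (hρ : ContDiff ℝ 1 ρ)
    (hFinv₁ : ∀ x, Fi f (Finv x) = x) (hFinv₂ : ∀ x, Finv (Fi f x) = x) :
    Continuous (Jv f Finv τ ρ X₀ N) := by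
  apply Continuous.add
  · apply ((continuous_Ft hf).comp (Finv_continuous hf hfpos hFinv₁ hFinv₂)).comp
    apply continuous_const.sub
    exact continuous_finset_sum _ fun i _ => (continuous_psi hf hρ).comp (continuous_apply i)
  · exact continuous_finset_sum _ fun i _ => (continuous_phi hf hρ).comp (continuous_apply i)

lemma Jv_ge_phi (hf : Continuous f) (hfpos : ∀ x, 0 < f x) (hτ : 0 < τ) (hk : 0 < k)
    (hρbd : ∀ x, k ≤ ρ x ∧ ρ x ≤ K) (δ : Fin N → ℝ) (i : Fin N) :
    phi f τ ρ (δ i) ≤ Jv f Finv τ ρ X₀ N δ := by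
  have h1 : (0:ℝ) ≤ Gf f Finv (X₀ - ∑ i, psi f τ ρ (δ i)) := Gf_nonneg hf hfpos _
  have h2 : phi f τ ρ (δ i) ≤ ∑ j, phi f τ ρ (δ j) :=
    Finset.single_le_sum (fun j _ => phi_nonneg hf hfpos hτ hk hρbd (δ j)) (Finset.mem_univ i)
  rw [Jv]
  linarith

lemma Jv_zero_eq (hf : Continuous f) : Jv f Finv τ ρ X₀ N (fun _ => 0) = Gf f Finv X₀ := by
  simp [Jv, psi_zero, phi_zero]

lemma exists_Jv_min (hf : Continuous f) (hfpos : ∀ x, 0 < f x) (hρ : ContDiff ℝ 1 ρ)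
    (hτ : 0 < τ) (hk : 0 < k) (hρbd : ∀ x, k ≤ ρ x ∧ ρ x ≤ K)
    (hFinv₁ : ∀ x, Fi f (Finv x) = x) (hFinv₂ : ∀ x, Finv (Fi f x) = x)
    (hfinf₁ : Filter.Tendsto (fun x : ℝ => x ^ 2 * sInf (f '' Set.uIcc (ab τ ρ x * x) x))
      Filter.atTop Filter.atTop)
    (hfinf₂ : Filter.Tendsto (fun x : ℝ => x ^ 2 * sInf (f '' Set.uIcc (ab τ ρ x * x) x))
      Filter.atBot Filter.atTop) :
    ∃ δ : Fin N → ℝ, ∀ δ' : Fin N → ℝ, Jv f Finv τ ρ X₀ N δ ≤ Jv f Finv τ ρ X₀ N δ' := by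
  set c := Jv f Finv τ ρ X₀ N (fun _ => 0) with hc
  have hc0 : 0 ≤ c := by rw [hc, Jv_zero_eq hf]; exact Gf_nonneg hf hfpos _
  -- the sublevel set of phi
  obtain ⟨R₁, hR₁⟩ := (phi_coercive_top hf hfpos hτ hk hρbd hfinf₁).eventually_gt_atTop c
    |>.exists_forall_of_atTop
  obtain ⟨R₀, hR₀⟩ := ((phi_coercive_bot hf hfpos hτ hk hρbd hfinf₂).eventually_gt_atTop c)
    |>.exists_forall_of_atBot
  set T : Set ℝ := {d | phi f τ ρ d ≤ c} with hT
  have hTsub : T ⊆ Set.Icc R₀ R₁ := by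
    intro d hd
    constructor
    · by_contra h
      exact absurd (hR₀ d (le_of_not_ge h)) (not_lt.2 hd)
    · by_contra h
      exact absurd (hR₁ d (le_of_not_ge h)) (not_lt.2 hd)
  have hTclosed : IsClosed T := isClosed_le (continuous_phi hf hρ) continuous_const
  have hTcompact : IsCompact T := isCompact_Icc.of_isClosed_subset hTclosed hTsub
  have h0T : (0:ℝ) ∈ T := by
    simp only [hT, Set.mem_setOf_eq, phi_zero]; exact hc0
  set KK : Set (Fin N → ℝ) := Set.univ.pi (fun _ => T) with hKK
  have hKKcompact : IsCompact KK := isCompact_univ_pi (fun _ => hTcompact)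
  have h0KK : (fun _ : Fin N => (0:ℝ)) ∈ KK := fun i _ => h0T
  obtain ⟨δ, hδKK, hδmin⟩ := hKKcompact.exists_isMinOn ⟨_, h0KK⟩
    ((continuous_Jv hf hfpos hρ hFinv₁ hFinv₂).continuousOn)
  refine ⟨δ, fun δ' => ?_⟩
  by_cases hδ' : δ' ∈ KK
  · exact hδmin hδ'
  · have hle : Jv f Finv τ ρ X₀ N δ ≤ c := hδmin h0KK
    rw [hKK, Set.mem_pi] at hδ'
    push_neg at hδ'
    obtain ⟨i, _, hi⟩ := hδ'
    simp only [hT, Set.mem_setOf_eq] at hi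
    have : c < phi f τ ρ (δ' i) := lt_of_not_ge hi
    have := Jv_ge_phi (Finv := Finv) (X₀ := X₀) hf hfpos hτ hk hρbd δ' i
    linarith

lemma Jv_min_critical (hf : Continuous f) (hfpos : ∀ x, 0 < f x) (hρ : ContDiff ℝ 1 ρ)
    (hFinv₁ : ∀ x, Fi f (Finv x) = x) (hFinv₂ : ∀ x, Finv (Fi f x) = x)
    {δ : Fin N → ℝ} (hmin : ∀ δ' : Fin N → ℝ, Jv f Finv τ ρ X₀ N δ ≤ Jv f Finv τ ρ X₀ N δ')
    (i : Fin N) :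
    (δ i) * numf f τ ρ (δ i) =
      Finv (X₀ - ∑ j, psi f τ ρ (δ j)) * den f τ ρ (δ i) := by
  set t₀ := δ i with ht₀
  set Cψ := ∑ j ∈ Finset.univ.erase i, psi f τ ρ (δ j) with hCψ
  set Cφ := ∑ j ∈ Finset.univ.erase i, phi f τ ρ (δ j) with hCφ
  have hup : ∀ t : ℝ, Jv f Finv τ ρ X₀ N (Function.update δ i t) =
      Gf f Finv (X₀ - (psi f τ ρ t + Cψ)) + (phi f τ ρ t + Cφ) := by
    intro t
    rw [Jv]
    congr 1
    · congr 2
      rw [← Finset.add_sum_erase _ _ (Finset.mem_univ i), Function.update_self]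
      congr 1
      apply Finset.sum_congr rfl
      intro j hj
      rw [Function.update_of_ne (Finset.ne_of_mem_erase hj)]
    · rw [← Finset.add_sum_erase _ _ (Finset.mem_univ i), Function.update_self]
      congr 1
      apply Finset.sum_congr rfl
      intro j hj
      rw [Function.update_of_ne (Finset.ne_of_mem_erase hj)]
  have hloc : IsLocalMin (fun t => Jv f Finv τ ρ X₀ N (Function.update δ i t)) t₀ := by
    apply Filter.Eventually.of_forall
    intro t
    show Jv f Finv τ ρ X₀ N (Function.update δ i t₀) ≤
      Jv f Finv τ ρ X₀ N (Function.update δ i t)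
    rw [ht₀, Function.update_eq_self]
    exact hmin _
  have hD : HasDerivAt (fun t => Jv f Finv τ ρ X₀ N (Function.update δ i t))
      (Finv (X₀ - (psi f τ ρ t₀ + Cψ)) * (-(den f τ ρ t₀)) + t₀ * numf f τ ρ t₀) t₀ := by
    have h1 : HasDerivAt (fun t => X₀ - (psi f τ ρ t + Cψ)) (-(den f τ ρ t₀)) t₀ :=
      (((hasDerivAt_psi hf hρ t₀).add_const Cψ).const_sub X₀)
    have h2 := (hasDerivAt_Gf hf hfpos hFinv₁ hFinv₂ (X₀ - (psi f τ ρ t₀ + Cψ))).comp t₀ h1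
    have h3 := h2.add ((hasDerivAt_phi (τ := τ) hf hρ t₀).add_const Cφ)
    have : (fun t => Jv f Finv τ ρ X₀ N (Function.update δ i t)) =
        (fun t => Gf f Finv (X₀ - (psi f τ ρ t + Cψ)) + (phi f τ ρ t + Cφ)) :=
      funext hup
    rw [this]
    exact h3
  have hzero := hloc.hasDerivAt_eq_zero hD
  have hsum : psi f τ ρ t₀ + Cψ = ∑ j, psi f τ ρ (δ j) := by
    rw [hCψ, ht₀]
    exact Finset.add_sum_erase _ (fun j => psi f τ ρ (δ j)) (Finset.mem_univ i)
  rw [hsum] at hzero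
  nlinarith [hzero]

end jv

section ident
variable {f Finv : ℝ → ℝ} {τ : ℝ} {ρ : ℝ → ℝ} {k K : ℝ} {X₀ : ℝ} {N : ℕ}

lemma Jv_min_h2 (hf : Continuous f) (hfpos : ∀ x, 0 < f x) (hρ : ContDiff ℝ 1 ρ)
    (hτ : 0 < τ) (hk : 0 < k) (hρbd : ∀ x, k ≤ ρ x ∧ ρ x ≤ K)
    (hh2 : Function.Injective (h2 f τ ρ))
    (hFinv₁ : ∀ x, Fi f (Finv x) = x) (hFinv₂ : ∀ x, Finv (Fi f x) = x)
    {δ : Fin N → ℝ} (hmin : ∀ δ' : Fin N → ℝ, Jv f Finv τ ρ X₀ N δ ≤ Jv f Finv τ ρ X₀ N δ')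
    (i : Fin N) :
    h2 f τ ρ (δ i) = Finv (X₀ - ∑ j, psi f τ ρ (δ j)) := by
  have hc := Jv_min_critical hf hfpos hρ hFinv₁ hFinv₂ hmin i
  have hden := den_ne_zero hτ hk hfpos hρbd hh2 (δ i)
  rw [h2_eq, mul_div_assoc', hc, mul_div_assoc, div_self hden, mul_one]

lemma Jv_min_all_eq (hf : Continuous f) (hfpos : ∀ x, 0 < f x) (hρ : ContDiff ℝ 1 ρ)
    (hτ : 0 < τ) (hk : 0 < k) (hρbd : ∀ x, k ≤ ρ x ∧ ρ x ≤ K)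
    (hh2 : Function.Injective (h2 f τ ρ))
    (hFinv₁ : ∀ x, Fi f (Finv x) = x) (hFinv₂ : ∀ x, Finv (Fi f x) = x)
    {δ : Fin N → ℝ} (hmin : ∀ δ' : Fin N → ℝ, Jv f Finv τ ρ X₀ N δ ≤ Jv f Finv τ ρ X₀ N δ')
    (i j : Fin N) : δ i = δ j := by
  apply hh2
  rw [Jv_min_h2 hf hfpos hρ hτ hk hρbd hh2 hFinv₁ hFinv₂ hmin i,
    Jv_min_h2 hf hfpos hρ hτ hk hρbd hh2 hFinv₁ hFinv₂ hmin j]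

lemma Jv_min_equation (hf : Continuous f) (hfpos : ∀ x, 0 < f x) (hρ : ContDiff ℝ 1 ρ)
    (hτ : 0 < τ) (hk : 0 < k) (hρbd : ∀ x, k ≤ ρ x ∧ ρ x ≤ K)
    (hh2 : Function.Injective (h2 f τ ρ))
    (hFinv₁ : ∀ x, Fi f (Finv x) = x) (hFinv₂ : ∀ x, Finv (Fi f x) = x)
    {δ : Fin N → ℝ} (hmin : ∀ δ' : Fin N → ℝ, Jv f Finv τ ρ X₀ N δ ≤ Jv f Finv τ ρ X₀ N δ')
    (i : Fin N) :
    Finv (X₀ - (N : ℝ) * psi f τ ρ (δ i)) = h2 f τ ρ (δ i) := by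
  have hsum : ∑ j, psi f τ ρ (δ j) = (N : ℝ) * psi f τ ρ (δ i) := by
    rw [Finset.sum_congr rfl (fun j _ => by
      rw [Jv_min_all_eq hf hfpos hρ hτ hk hρbd hh2 hFinv₁ hFinv₂ hmin j i])]
    rw [Finset.sum_const, Finset.card_univ, Fintype.card_fin, nsmul_eq_mul]
  rw [← hsum, Jv_min_h2 hf hfpos hρ hτ hk hρbd hh2 hFinv₁ hFinv₂ hmin i]

lemma equation_unique (hf : Continuous f) (hfpos : ∀ x, 0 < f x) (hρ : ContDiff ℝ 1 ρ)
    (hτ : 0 < τ) (hk : 0 < k) (hρbd : ∀ x, k ≤ ρ x ∧ ρ x ≤ K)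
    (hρ' : ∀ x, 0 < 1 - τ * deriv ρ x * x)
    (hh2 : Function.Injective (h2 f τ ρ))
    (hFinv₁ : ∀ x, Fi f (Finv x) = x) (hN : 1 ≤ N)
    {d₁ d₂ : ℝ} (h₁ : Finv (X₀ - (N : ℝ) * psi f τ ρ d₁) = h2 f τ ρ d₁)
    (h₂ : Finv (X₀ - (N : ℝ) * psi f τ ρ d₂) = h2 f τ ρ d₂) : d₁ = d₂ := by
  have hNpos : (0 : ℝ) < N := by exact_mod_cast hN
  have key : ∀ a b : ℝ, a < b →
      Finv (X₀ - (N : ℝ) * psi f τ ρ a) = h2 f τ ρ a →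
      Finv (X₀ - (N : ℝ) * psi f τ ρ b) = h2 f τ ρ b → False := by
    intro a b hab ha hb
    have hψ : psi f τ ρ a < psi f τ ρ b := psi_strictMono hf hρ hτ hk hfpos hρbd hh2 hab
    have hFi : Finv (X₀ - (N : ℝ) * psi f τ ρ b) < Finv (X₀ - (N : ℝ) * psi f τ ρ a) :=
      Finv_strictMono hf hfpos hFinv₁ (by nlinarith)
    have hh : h2 f τ ρ a < h2 f τ ρ b :=
      h2_strictMono hf hρ hτ hk hfpos hρbd hρ' hh2 hab
    rw [ha, hb] at hFi
    linarith
  rcases lt_trichotomy d₁ d₂ with h | h | h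
  · exact absurd (key d₁ d₂ h h₁ h₂) not_false
  · exact h
  · exact absurd (key d₂ d₁ h h₂ h₁) not_false

lemma solution_pos (hf : Continuous f) (hfpos : ∀ x, 0 < f x) (hρ : ContDiff ℝ 1 ρ)
    (hτ : 0 < τ) (hk : 0 < k) (hρbd : ∀ x, k ≤ ρ x ∧ ρ x ≤ K)
    (hρ' : ∀ x, 0 < 1 - τ * deriv ρ x * x)
    (hh2 : Function.Injective (h2 f τ ρ))
    (hFinv₁ : ∀ x, Fi f (Finv x) = x) (hX₀ : 0 < X₀) (hN : 1 ≤ N)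
    {d : ℝ} (hd : Finv (X₀ - (N : ℝ) * psi f τ ρ d) = h2 f τ ρ d) : 0 < d := by
  by_contra h
  push_neg at h
  have hψ : psi f τ ρ d ≤ 0 := psi_nonpos hf hτ hk hfpos hρbd h
  have hNpos : (0 : ℝ) < N := by exact_mod_cast hN
  have h1 : 0 < X₀ - (N : ℝ) * psi f τ ρ d := by nlinarith
  have h2' : Finv 0 < Finv (X₀ - (N : ℝ) * psi f τ ρ d) :=
    Finv_strictMono hf hfpos hFinv₁ h1
  rw [Finv_zero hf hfpos hFinv₁, hd] at h2'
  have h3 : h2 f τ ρ d ≤ h2 f τ ρ 0 :=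
    (h2_strictMono hf hρ hτ hk hfpos hρbd hρ' hh2).monotone h
  rw [h2_zero] at h3
  linarith

end ident

noncomputable def dlt (f Finv : ℝ → ℝ) (τ : ℝ) (ρ : ℝ → ℝ) (x : ℕ → ℝ) (n : ℕ) : ℝ :=
  Finv (Fi f (Dv f Finv τ ρ x n) + x n)

section bridge
variable {f Finv : ℝ → ℝ} {τ : ℝ} {ρ : ℝ → ℝ} {X₀ : ℝ} {N : ℕ}

lemma Dv_succ (x : ℕ → ℝ) (n : ℕ) :
    Dv f Finv τ ρ x (n + 1) = gab τ ρ (dlt f Finv τ ρ x n) := rfl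

lemma Dv_zero (x : ℕ → ℝ) : Dv f Finv τ ρ x 0 = 0 := rfl

lemma Fi_dlt (hFinv₁ : ∀ x, Fi f (Finv x) = x) (x : ℕ → ℝ) (n : ℕ) :
    Fi f (dlt f Finv τ ρ x n) = Fi f (Dv f Finv τ ρ x n) + x n := hFinv₁ _

lemma partial_sum_eq (hFinv₁ : ∀ x, Fi f (Finv x) = x) (x : ℕ → ℝ) (m : ℕ) :
    ∑ n ∈ Finset.range (m + 1), x n =
      Fi f (dlt f Finv τ ρ x m) + ∑ n ∈ Finset.range m, psi f τ ρ (dlt f Finv τ ρ x n) := by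
  induction m with
  | zero =>
      rw [zero_add, Finset.sum_range_one, Finset.range_zero, Finset.sum_empty, add_zero,
        Fi_dlt hFinv₁, Dv_zero, Fi_zero, zero_add]
  | succ m ih =>
      rw [Finset.sum_range_succ, ih, Finset.sum_range_succ]
      have hx : x (m + 1) = Fi f (dlt f Finv τ ρ x (m + 1)) -
          Fi f (gab τ ρ (dlt f Finv τ ρ x m)) := by
        rw [Fi_dlt hFinv₁, Dv_succ]
        ring
      rw [hx, psi]
      ring

lemma C2_eq_sum (hFinv₁ : ∀ x, Fi f (Finv x) = x) (x : ℕ → ℝ) (m : ℕ) :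
    ∑ n ∈ Finset.range (m + 1),
        (Gf f Finv (x n + Fi f (Dv f Finv τ ρ x n)) - Ft f (Dv f Finv τ ρ x n)) =
      Ft f (dlt f Finv τ ρ x m) + ∑ n ∈ Finset.range m, phi f τ ρ (dlt f Finv τ ρ x n) := by
  have hterm : ∀ n, Gf f Finv (x n + Fi f (Dv f Finv τ ρ x n)) = Ft f (dlt f Finv τ ρ x n) := by
    intro n
    rw [Gf, dlt, add_comm]
  induction m with
  | zero =>
      rw [zero_add, Finset.sum_range_one, Finset.range_zero, Finset.sum_empty, add_zero,
        hterm, Dv_zero, Ft_zero, sub_zero]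
  | succ m ih =>
      rw [Finset.sum_range_succ, ih, Finset.sum_range_succ, hterm, Dv_succ, phi]
      ring

lemma C2_eq_Jv (hFinv₁ : ∀ x, Fi f (Finv x) = x) (hFinv₂ : ∀ x, Finv (Fi f x) = x)
    (x : ℕ → ℝ) (hsum : ∑ n ∈ Finset.range (N + 1), x n = X₀) :
    C2 f Finv τ ρ N x = Jv f Finv τ ρ X₀ N (fun i : Fin N => dlt f Finv τ ρ x i) := by
  have hps := partial_sum_eq (τ := τ) (ρ := ρ) hFinv₁ x N
  rw [hsum] at hps
  have hsum' := Fin.sum_univ_eq_sum_range (fun n => psi f τ ρ (dlt f Finv τ ρ x n)) N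
  have hFiN : Fi f (dlt f Finv τ ρ x N) =
      X₀ - ∑ n ∈ Finset.range N, psi f τ ρ (dlt f Finv τ ρ x n) := by linarith
  have hdN : dlt f Finv τ ρ x N =
      Finv (X₀ - ∑ n ∈ Finset.range N, psi f τ ρ (dlt f Finv τ ρ x n)) := by
    rw [← hFiN, dlt, hFinv₂ (Finv (Fi f (Dv f Finv τ ρ x N) + x N))]
  rw [C2, C2_eq_sum hFinv₁, Jv, Gf, hsum', ← hdN]
  congr 1
  exact (Fin.sum_univ_eq_sum_range _ N).symm

/-- reconstruction of a strategy from post-trade values -/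
noncomputable def recx (f Finv : ℝ → ℝ) (τ : ℝ) (ρ : ℝ → ℝ) (X₀ : ℝ) (N : ℕ)
    (δ : Fin N → ℝ) : ℕ → ℝ :=
  fun n =>
    let e : ℕ → ℝ := fun m =>
      if h : m < N then δ ⟨m, h⟩ else Finv (X₀ - ∑ i, psi f τ ρ (δ i))
    if n = 0 then Fi f (e 0) else Fi f (e n) - Fi f (gab τ ρ (e (n - 1)))

lemma recx_dlt (hFinv₁ : ∀ x, Fi f (Finv x) = x) (hFinv₂ : ∀ x, Finv (Fi f x) = x)
    (δ : Fin N → ℝ) (n : ℕ) :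
    dlt f Finv τ ρ (recx f Finv τ ρ X₀ N δ) n =
      (fun m => if h : m < N then δ ⟨m, h⟩ else Finv (X₀ - ∑ i, psi f τ ρ (δ i))) n := by
  induction n with
  | zero =>
      rw [dlt, Dv_zero, Fi_zero, zero_add, recx]
      simp only [if_pos rfl]
      exact hFinv₂ _
  | succ n ih =>
      rw [dlt, Dv_succ, ih]
      have hx : recx f Finv τ ρ X₀ N δ (n + 1) =
          Fi f ((fun m => if h : m < N then δ ⟨m, h⟩
              else Finv (X₀ - ∑ i, psi f τ ρ (δ i))) (n + 1)) -
            Fi f (gab τ ρ ((fun m => if h : m < N then δ ⟨m, h⟩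
              else Finv (X₀ - ∑ i, psi f τ ρ (δ i))) n)) := by
        rw [recx]
        simp only [Nat.succ_ne_zero, if_false, Nat.add_sub_cancel]
      rw [hx]
      rw [add_sub_cancel]
      exact hFinv₂ _

lemma recx_sum (hFinv₁ : ∀ x, Fi f (Finv x) = x) (hFinv₂ : ∀ x, Finv (Fi f x) = x)
    (δ : Fin N → ℝ) :
    ∑ n ∈ Finset.range (N + 1), recx f Finv τ ρ X₀ N δ n = X₀ := by
  rw [partial_sum_eq hFinv₁]
  have h1 : dlt f Finv τ ρ (recx f Finv τ ρ X₀ N δ) N =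
      Finv (X₀ - ∑ i, psi f τ ρ (δ i)) := by
    rw [recx_dlt hFinv₁ hFinv₂]
    exact dif_neg (lt_irrefl N)
  have h2 : ∑ n ∈ Finset.range N, psi f τ ρ (dlt f Finv τ ρ (recx f Finv τ ρ X₀ N δ) n) =
      ∑ i, psi f τ ρ (δ i) := by
    rw [← Fin.sum_univ_eq_sum_range
      (fun n => psi f τ ρ (dlt f Finv τ ρ (recx f Finv τ ρ X₀ N δ) n)) N]
    apply Finset.sum_congr rfl
    intro i _
    rw [recx_dlt hFinv₁ hFinv₂]
    simp only [i.isLt, dif_pos, Fin.eta]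
  rw [h1, h2, hFinv₁]
  ring

lemma recx_C2 (hFinv₁ : ∀ x, Fi f (Finv x) = x) (hFinv₂ : ∀ x, Finv (Fi f x) = x)
    (δ : Fin N → ℝ) :
    C2 f Finv τ ρ N (recx f Finv τ ρ X₀ N δ) = Jv f Finv τ ρ X₀ N δ := by
  rw [C2_eq_Jv hFinv₁ hFinv₂ _ (recx_sum hFinv₁ hFinv₂ δ)]
  congr 1
  funext i
  rw [recx_dlt hFinv₁ hFinv₂]
  simp only [i.isLt, dif_pos, Fin.eta]

end bridge

section recxc
variable {f Finv : ℝ → ℝ} {τ : ℝ} {ρ : ℝ → ℝ} {X₀ : ℝ} {N : ℕ}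

lemma recx_zero (δ : Fin N → ℝ) (hN : 0 < N) :
    recx f Finv τ ρ X₀ N δ 0 = Fi f (δ ⟨0, hN⟩) := by
  rw [recx]
  simp only [if_pos rfl, if_true]
  rw [dif_pos hN]

lemma recx_mid (δ : Fin N → ℝ) {n : ℕ} (hn : n ≠ 0) (hnN : n < N) :
    recx f Finv τ ρ X₀ N δ n =
      Fi f (δ ⟨n, hnN⟩) - Fi f (gab τ ρ (δ ⟨n - 1, lt_of_le_of_lt (Nat.sub_le n 1) hnN⟩)) := by
  rw [recx]
  simp only [if_neg hn]
  rw [dif_pos hnN, dif_pos (lt_of_le_of_lt (Nat.sub_le n 1) hnN)]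

lemma recx_last (δ : Fin N → ℝ) (hN : 0 < N) :
    recx f Finv τ ρ X₀ N δ N =
      Fi f (Finv (X₀ - ∑ i, psi f τ ρ (δ i))) -
        Fi f (gab τ ρ (δ ⟨N - 1, Nat.sub_lt hN one_pos⟩)) := by
  rw [recx]
  simp only [if_neg (Nat.pos_iff_ne_zero.mp hN)]
  rw [dif_neg (lt_irrefl N), dif_pos (Nat.sub_lt hN one_pos)]

lemma dlt_last (hFinv₁ : ∀ x, Fi f (Finv x) = x) (hFinv₂ : ∀ x, Finv (Fi f x) = x)
    (x : ℕ → ℝ) (hsum : ∑ n ∈ Finset.range (N + 1), x n = X₀) :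
    dlt f Finv τ ρ x N =
      Finv (X₀ - ∑ n ∈ Finset.range N, psi f τ ρ (dlt f Finv τ ρ x n)) := by
  have hps := partial_sum_eq (τ := τ) (ρ := ρ) hFinv₁ x N
  rw [hsum] at hps
  have hFiN : Fi f (dlt f Finv τ ρ x N) =
      X₀ - ∑ n ∈ Finset.range N, psi f τ ρ (dlt f Finv τ ρ x n) := by linarith
  rw [← hFiN, dlt, hFinv₂ (Finv (Fi f (Dv f Finv τ ρ x N) + x N))]

lemma x_eq_Fi_sub (hFinv₁ : ∀ x, Fi f (Finv x) = x) (x : ℕ → ℝ) (n : ℕ) :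
    x n = Fi f (dlt f Finv τ ρ x n) - Fi f (Dv f Finv τ ρ x n) := by
  have := Fi_dlt (τ := τ) (ρ := ρ) hFinv₁ x n
  linarith

end recxc

/-- Optimal strategy for the generalized AFS model, Version 2. -/
theorem gafs_version2_optimal_strategy
    (f Finv : ℝ → ℝ) (hf : Continuous f) (hfpos : ∀ x, 0 < f x)
    (htop : Tendsto (Fi f) atTop atTop) (hbot : Tendsto (Fi f) atBot atBot)
    (hFinv₁ : ∀ x, Fi f (Finv x) = x) (hFinv₂ : ∀ x, Finv (Fi f x) = x)
    (τ : ℝ) (hτ : 0 < τ) (ρ : ℝ → ℝ) (hρ : ContDiff ℝ 1 ρ)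
    (k K : ℝ) (hk : 0 < k) (hkK : k < K) (hρbd : ∀ x, k ≤ ρ x ∧ ρ x ≤ K)
    (hρ' : ∀ x, 0 < 1 - τ * deriv ρ x * x)
    (hfinf₁ : Tendsto (fun x : ℝ => x ^ 2 * sInf (f '' Set.uIcc (ab τ ρ x * x) x)) atTop atTop)
    (hfinf₂ : Tendsto (fun x : ℝ => x ^ 2 * sInf (f '' Set.uIcc (ab τ ρ x * x) x)) atBot atTop)
    (N : ℕ) (hN : 1 ≤ N) (X₀ : ℝ) (hX₀ : 0 < X₀)
    (hh2 : Function.Injective (h2 f τ ρ)) :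
    ∃ ξ : ℕ → ℝ,
      (∑ n ∈ Finset.range (N + 1), ξ n = X₀) ∧
      (∀ y : ℕ → ℝ, (∑ n ∈ Finset.range (N + 1), y n = X₀) →
        C2 f Finv τ ρ N ξ ≤ C2 f Finv τ ρ N y) ∧
      (∀ y : ℕ → ℝ, (∑ n ∈ Finset.range (N + 1), y n = X₀) →
        (∀ z : ℕ → ℝ, (∑ n ∈ Finset.range (N + 1), z n = X₀) →
          C2 f Finv τ ρ N y ≤ C2 f Finv τ ρ N z) →
        ∀ n ≤ N, y n = ξ n) ∧
      (Finv (X₀ - (N : ℝ) * (ξ 0 - Fi f (ab τ ρ (Finv (ξ 0)) * Finv (ξ 0)))) =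
        h2 f τ ρ (Finv (ξ 0))) ∧
      (∀ z : ℝ, Finv (X₀ - (N : ℝ) * (z - Fi f (ab τ ρ (Finv z) * Finv z))) =
        h2 f τ ρ (Finv z) → z = ξ 0) ∧
      (∀ n : ℕ, 1 ≤ n → n < N →
        ξ n = ξ 0 - Fi f (ab τ ρ (Finv (ξ 0)) * Finv (ξ 0))) ∧
      (ξ N = X₀ - ∑ n ∈ Finset.range N, ξ n) ∧
      (∀ n ≤ N, 0 < ξ n) := by
  have hN0 : 0 < N := hN
  obtain ⟨δs, hδs⟩ := exists_Jv_min (X₀ := X₀) (N := N) hf hfpos hρ hτ hk hρbd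
    hFinv₁ hFinv₂ hfinf₁ hfinf₂
  set i0 : Fin N := ⟨0, hN0⟩ with hi0
  set d : ℝ := δs i0 with hd
  have hall : ∀ i, δs i = d := fun i =>
    Jv_min_all_eq hf hfpos hρ hτ hk hρbd hh2 hFinv₁ hFinv₂ hδs i i0
  have heq : Finv (X₀ - (N : ℝ) * psi f τ ρ d) = h2 f τ ρ d :=
    Jv_min_equation hf hfpos hρ hτ hk hρbd hh2 hFinv₁ hFinv₂ hδs i0
  have hdpos : 0 < d :=
    solution_pos hf hfpos hρ hτ hk hρbd hρ' hh2 hFinv₁ hX₀ hN heq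
  have hsumδ : ∑ i, psi f τ ρ (δs i) = (N : ℝ) * psi f τ ρ d := by
    rw [Finset.sum_congr rfl (fun i _ => by rw [hall i]), Finset.sum_const,
      Finset.card_univ, Fintype.card_fin, nsmul_eq_mul]
  set ξ : ℕ → ℝ := recx f Finv τ ρ X₀ N δs with hξdef
  have hξ0 : ξ 0 = Fi f d := by rw [hξdef, recx_zero δs hN0, hall]
  have hFinvξ0 : Finv (ξ 0) = d := by rw [hξ0, hFinv₂]
  have hψval : ξ 0 - Fi f (ab τ ρ (Finv (ξ 0)) * Finv (ξ 0)) = psi f τ ρ d := by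
    rw [hFinvξ0, hξ0, psi, gab]
  have hξmid : ∀ n, 1 ≤ n → n < N → ξ n = psi f τ ρ d := by
    intro n h1 h2'
    rw [hξdef, recx_mid δs (Nat.one_le_iff_ne_zero.mp h1) h2', hall, hall, psi]
  have hξN : ξ N = X₀ - (N : ℝ) * psi f τ ρ d - Fi f (gab τ ρ d) := by
    rw [hξdef, recx_last δs hN0, hall, hsumδ, hFinv₁]
  have hξsum : ∑ n ∈ Finset.range (N + 1), ξ n = X₀ := recx_sum hFinv₁ hFinv₂ δs
  have hC2ξ : C2 f Finv τ ρ N ξ = Jv f Finv τ ρ X₀ N δs := recx_C2 hFinv₁ hFinv₂ δs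
  have hmincomp : ∀ y : ℕ → ℝ, (∑ n ∈ Finset.range (N + 1), y n = X₀) →
      (∀ z : ℕ → ℝ, (∑ n ∈ Finset.range (N + 1), z n = X₀) →
        C2 f Finv τ ρ N y ≤ C2 f Finv τ ρ N z) →
      (∀ n, n < N → dlt f Finv τ ρ y n = d) := by
    intro y hysum hymin
    have hJy : ∀ δ' : Fin N → ℝ, Jv f Finv τ ρ X₀ N (fun i : Fin N => dlt f Finv τ ρ y i) ≤
        Jv f Finv τ ρ X₀ N δ' := by
      intro δ'
      rw [← C2_eq_Jv hFinv₁ hFinv₂ y hysum, ← recx_C2 (X₀ := X₀) hFinv₁ hFinv₂ δ']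
      exact hymin _ (recx_sum hFinv₁ hFinv₂ δ')
    have hyeq := Jv_min_equation hf hfpos hρ hτ hk hρbd hh2 hFinv₁ hFinv₂ hJy i0
    have hdy : dlt f Finv τ ρ y i0 = d :=
      equation_unique hf hfpos hρ hτ hk hρbd hρ' hh2 hFinv₁ hN hyeq heq
    intro n hn
    have h5 := Jv_min_all_eq hf hfpos hρ hτ hk hρbd hh2 hFinv₁ hFinv₂ hJy ⟨n, hn⟩ i0
    exact h5.trans hdy
  refine ⟨ξ, hξsum, ?_, ?_, ?_, ?_, ?_, ?_, ?_⟩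
  · -- minimality
    intro y hy
    rw [hC2ξ, C2_eq_Jv hFinv₁ hFinv₂ y hy]
    exact hδs _
  · -- uniqueness of minimizer
    intro y hysum hymin n hnN
    have hcomp := hmincomp y hysum hymin
    by_cases hn0 : n = 0
    · subst hn0
      rw [x_eq_Fi_sub (τ := τ) (ρ := ρ) hFinv₁ y 0, Dv_zero, Fi_zero, hcomp 0 hN0, hξ0,
        sub_zero]
    · by_cases hnN' : n = N
      · rw [hnN']
        have hsy : ∑ m ∈ Finset.range N, psi f τ ρ (dlt f Finv τ ρ y m) =
            (N : ℝ) * psi f τ ρ d := by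
          rw [Finset.sum_congr rfl (fun m hm => by rw [hcomp m (Finset.mem_range.mp hm)]),
            Finset.sum_const, Finset.card_range, nsmul_eq_mul]
        have hdN : dlt f Finv τ ρ y N = Finv (X₀ - (N : ℝ) * psi f τ ρ d) := by
          rw [dlt_last hFinv₁ hFinv₂ y hysum, hsy]
        have hDvN : Dv f Finv τ ρ y N = gab τ ρ (dlt f Finv τ ρ y (N - 1)) := by
          conv_lhs => rw [show N = (N - 1) + 1 from (Nat.succ_pred_eq_of_pos hN0).symm]
          exact Dv_succ y (N - 1)
        rw [x_eq_Fi_sub (τ := τ) (ρ := ρ) hFinv₁ y N, hdN, hFinv₁, hDvN,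
          hcomp (N - 1) (Nat.sub_lt hN0 one_pos), hξN]
      · have hnltN : n < N := lt_of_le_of_ne hnN hnN'
        obtain ⟨m, rfl⟩ := Nat.exists_eq_succ_of_ne_zero hn0
        rw [x_eq_Fi_sub (τ := τ) (ρ := ρ) hFinv₁ y (m + 1), Dv_succ,
          hcomp (m + 1) hnltN, hcomp m (Nat.lt_of_succ_lt hnltN),
          hξmid (m + 1) (Nat.one_le_iff_ne_zero.mpr hn0) hnltN, psi]
  · -- the equation for ξ 0
    rw [hψval, hFinvξ0]
    exact heq
  · -- uniqueness of solution
    intro z hz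
    have h1 : z - Fi f (ab τ ρ (Finv z) * Finv z) = psi f τ ρ (Finv z) := by
      rw [psi, hFinv₁, gab]
    rw [h1] at hz
    have h2' : Finv z = d :=
      equation_unique hf hfpos hρ hτ hk hρbd hρ' hh2 hFinv₁ hN hz heq
    rw [← hFinv₁ z, h2', ← hξ0]
  · -- intermediate components
    intro n h1 h2'
    rw [hξmid n h1 h2']
    exact hψval.symm
  · -- last component
    rw [Finset.sum_range_succ] at hξsum
    linarith
  · -- positivity
    intro n hnN
    by_cases hn0 : n = 0
    · subst hn0
      rw [hξ0]
      have h := Fi_strictMono hf hfpos hdpos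
      rwa [Fi_zero] at h
    · by_cases hnN' : n = N
      · rw [hnN']
        have hFih2 : Fi f (h2 f τ ρ d) = X₀ - (N : ℝ) * psi f τ ρ d := by
          rw [← heq, hFinv₁]
        have hgt1 : d < h2 f τ ρ d := h2_gt_self hf hρ hτ hk hfpos hρbd hρ' hh2 hdpos
        have hgt2 : gab τ ρ d < d := gab_lt_self hτ hk hρbd hdpos
        have hFi : Fi f (gab τ ρ d) < Fi f (h2 f τ ρ d) :=
          Fi_strictMono hf hfpos (lt_trans hgt2 hgt1)
        rw [hξN]
        linarith
      · have hnltN : n < N := lt_of_le_of_ne hnN hnN'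
        rw [hξmid n (Nat.one_le_iff_ne_zero.mpr hn0) hnltN]
        exact psi_pos hf hτ hk hfpos hρbd hdpos
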